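/- arXiv:2312.17640 — 2 statements merged into one kernel-verified Lean document; each statement's English description precedes it below -/
import Mathlib

section
/- Let A be a real m×n matrix, b ∈ ℝ^m, and assume V = {v ∈ ℝ^n : A v ≥ b} is nonempty and bounded. Then for every c ∈ ℝ^n there exist v ∈ ℝ^n and ρ ∈ ℝ^m such that A v ≥ b, ρ ≥ 0, A^T ρ = c, and c · v ≤ b · ρ; that is, the primal–dual strong duality system of the linear program min{c · v : A v ≥ b} is feasible for every objective c. -/
open Matrix Set BigOperators RealInnerProductSpace

section ConeClosed

set_option linter.unusedSectionVars false


variable {ι : Type*} [Fintype ι] [DecidableEq ι] {E : Type*} [NormedAddCommGroup E]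
  [NormedSpace ℝ E] [FiniteDimensional ℝ E]

/-- Carathéodory for cones. -/
lemma cone_caratheodory (g : ι → E) (s : Finset ι) (x : E)
    (h : ∃ ρ : ι → ℝ, (∀ i ∈ s, 0 ≤ ρ i) ∧ x = ∑ i ∈ s, ρ i • g i) :
    ∃ t ⊆ s, LinearIndependent ℝ (fun i : t => g (i : ι)) ∧
      ∃ ρ : ι → ℝ, (∀ i ∈ t, 0 ≤ ρ i) ∧ x = ∑ i ∈ t, ρ i • g i := by
  induction s using Finset.strongInductionOn generalizing x with
  | _ s ih =>
  obtain ⟨ρ, hρ, hx⟩ := h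
  by_cases hli : LinearIndependent ℝ (fun i : s => g (i : ι))
  · exact ⟨s, le_refl _, hli, ρ, hρ, hx⟩
  · obtain ⟨c, hc0, i₁, hi₁⟩ := Fintype.not_linearIndependent_iff.mp hli
    -- extend c to ι
    set d : ι → ℝ := fun i => if h : i ∈ s then c ⟨i, h⟩ else 0 with hd
    have hdsum : ∑ i ∈ s, d i • g i = 0 := by
      rw [← hc0, ← Finset.sum_attach s (fun i => d i • g i)]
      exact Finset.sum_congr rfl (fun i _ => by simp [hd, i.2])
    have hdne : ∃ i ∈ s, d i ≠ 0 := ⟨i₁, i₁.2, by simpa [hd, i₁.2] using hi₁⟩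
    -- WLOG some d i > 0
    have key : ∀ d : ι → ℝ, (∑ i ∈ s, d i • g i = 0) → (∃ i ∈ s, 0 < d i) →
        ∃ t ⊆ s, LinearIndependent ℝ (fun i : t => g (i : ι)) ∧
          ∃ ρ' : ι → ℝ, (∀ i ∈ t, 0 ≤ ρ' i) ∧ x = ∑ i ∈ t, ρ' i • g i := by
      intro d hdsum hdpos
      obtain ⟨i₀, hi₀mem, hi₀min⟩ := Finset.exists_min_image (s.filter fun i => 0 < d i)
        (fun i => ρ i / d i) (by obtain ⟨i, hi, hdi⟩ := hdpos; exact ⟨i, Finset.mem_filter.mpr ⟨hi, hdi⟩⟩)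
      rw [Finset.mem_filter] at hi₀mem
      obtain ⟨hi₀s, hi₀pos⟩ := hi₀mem
      set μ := ρ i₀ / d i₀ with hμ
      have hμ0 : 0 ≤ μ := div_nonneg (hρ _ hi₀s) hi₀pos.le
      set ρ' : ι → ℝ := fun i => ρ i - μ * d i with hρ'
      have hρ'nn : ∀ i ∈ s, 0 ≤ ρ' i := by
        intro i hi
        rcases le_or_gt (d i) 0 with hdi | hdi
        · have : μ * d i ≤ 0 := mul_nonpos_of_nonneg_of_nonpos hμ0 hdi
          simp only [hρ']; linarith [hρ i hi]
        · have := hi₀min i (Finset.mem_filter.mpr ⟨hi, hdi⟩)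
          simp only [hρ']
          have h2 : μ * d i ≤ ρ i := by
            have := (le_div_iff₀ hdi).mp this
            linarith
          linarith
      have hρ'i₀ : ρ' i₀ = 0 := by
        simp only [hρ', hμ]; field_simp; ring
      have hxnew : x = ∑ i ∈ s.erase i₀, ρ' i • g i := by
        have : ∑ i ∈ s, ρ' i • g i = ∑ i ∈ s, ρ i • g i - μ • ∑ i ∈ s, d i • g i := by
          rw [Finset.smul_sum, ← Finset.sum_sub_distrib]
          exact Finset.sum_congr rfl (fun i _ => by simp [hρ', sub_smul, smul_smul])
        rw [← Finset.add_sum_erase s _ hi₀s] at this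
        rw [hρ'i₀, zero_smul, zero_add] at this
        rw [hdsum, smul_zero, sub_zero] at this
        rw [this, hx]
      obtain ⟨t, hts, h1, h2⟩ := ih (s.erase i₀) (Finset.erase_ssubset hi₀s) x
        ⟨ρ', fun i hi => hρ'nn i (Finset.mem_of_mem_erase hi), hxnew⟩
      exact ⟨t, hts.trans (Finset.erase_subset _ _), h1, h2⟩
    obtain ⟨i, hi, hdi⟩ := hdne
    rcases hdi.lt_or_gt with hneg | hpos
    · exact key (-d) (by simpa [neg_smul] using hdsum) ⟨i, hi, by simpa using hneg⟩
    · exact key d hdsum ⟨i, hi, hpos⟩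

/-- A finitely generated cone is closed. -/
lemma fg_cone_isClosed (g : ι → E) :
    IsClosed {x : E | ∃ ρ : ι → ℝ, 0 ≤ ρ ∧ x = ∑ i, ρ i • g i} := by
  have main : {x : E | ∃ ρ : ι → ℝ, 0 ≤ ρ ∧ x = ∑ i, ρ i • g i} =
      ⋃ t : {t : Finset ι // LinearIndependent ℝ (fun i : t => g (i : ι))},
        (fun ρ : {i // i ∈ (t : Finset ι)} → ℝ => ∑ i, ρ i • g (i : ι)) '' {ρ | 0 ≤ ρ} := by
    ext x
    constructor
    · rintro ⟨ρ, hρ, hx⟩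
      obtain ⟨t, -, hli, ρ', hρ', hx'⟩ := cone_caratheodory g Finset.univ x
        ⟨ρ, fun i _ => hρ i, by simpa using hx⟩
      refine mem_iUnion.mpr ⟨⟨t, hli⟩, ⟨fun i => ρ' i, fun i => hρ' i i.2, ?_⟩⟩
      rw [hx', ← Finset.sum_attach t (fun i => ρ' i • g i)]
      rfl
    · rintro ⟨_, ⟨⟨t, hli⟩, rfl⟩, ρ, hρ, rfl⟩
      refine ⟨fun i => if h : i ∈ t then ρ ⟨i, h⟩ else 0, fun i => ?_, ?_⟩
      · dsimp only; split
        · exact hρ _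
        · exact le_refl 0
      · rw [← Finset.sum_subset (Finset.subset_univ t)
          (fun i _ hit => by simp [hit])]
        rw [← Finset.sum_attach t (fun i => (if h : i ∈ t then ρ ⟨i, h⟩ else (0:ℝ)) • g i)]
        exact Finset.sum_congr rfl fun i _ => by simp [i.2]
  rw [main]
  apply isClosed_iUnion_of_finite
  rintro ⟨t, hli⟩
  set L : ({i // i ∈ (t : Finset ι)} → ℝ) →ₗ[ℝ] E :=
    Fintype.linearCombination ℝ (fun i : {i // i ∈ (t : Finset ι)} => g (i : ι)) with hLset
  have hLdef : ∀ ρ, L ρ = ∑ i, ρ i • g (i : ι) := fun ρ => by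
    rw [hLset, Fintype.linearCombination_apply]
  have hinj : LinearMap.ker L = ⊥ := by
    rw [LinearMap.ker_eq_bot']
    intro ρ hρ
    rw [hLdef] at hρ
    exact funext (Fintype.linearIndependent_iff.mp hli ρ hρ)
  have hemb := LinearMap.isClosedEmbedding_of_injective hinj
  have horth : IsClosed {ρ : {i // i ∈ (t : Finset ι)} → ℝ | 0 ≤ ρ} := by
    have : {ρ : {i // i ∈ (t : Finset ι)} → ℝ | 0 ≤ ρ} = ⋂ i, {ρ | 0 ≤ ρ i} := by
      ext ρ; simp [Pi.le_def]
    rw [this]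
    exact isClosed_iInter fun i => isClosed_le continuous_const (continuous_apply i)
  have himg : (fun ρ : {i // i ∈ (t : Finset ι)} → ℝ => ∑ i, ρ i • g (i : ι)) '' {ρ | 0 ≤ ρ}
      = L '' {ρ | 0 ≤ ρ} := by
    apply Set.image_congr
    intro ρ _
    exact (hLdef ρ).symm
  rw [himg]
  exact hemb.isClosedMap _ horth


end ConeClosed

theorem stmt_14 (m n : ℕ)
    (A : Matrix (Fin m) (Fin n) ℝ) (b : Fin m → ℝ)
    (hne : {v : Fin n → ℝ | b ≤ A.mulVec v}.Nonempty)
    (hbd : Bornology.IsBounded {v : Fin n → ℝ | b ≤ A.mulVec v}) :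
    ∀ c : Fin n → ℝ, ∃ (v : Fin n → ℝ) (ρ : Fin m → ℝ),
      b ≤ A.mulVec v ∧ 0 ≤ ρ ∧ Aᵀ.mulVec ρ = c ∧ c ⬝ᵥ v ≤ b ⬝ᵥ ρ := by
  intro c
  set V := {v : Fin n → ℝ | b ≤ A.mulVec v} with hV
  -- V is compact
  have hmvc : ∀ i : Fin m, Continuous (fun v : Fin n → ℝ => A.mulVec v i) := by
    intro i
    simp only [Matrix.mulVec, dotProduct]
    exact continuous_finset_sum _ fun j _ => (continuous_const.mul (continuous_apply j))
  have hVclosed : IsClosed V := by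
    have : V = ⋂ i, {v : Fin n → ℝ | b i ≤ A.mulVec v i} := by
      ext v; simp [hV, Pi.le_def]
    rw [this]
    exact isClosed_iInter fun i => isClosed_le continuous_const (hmvc i)
  have hVcomp : IsCompact V := Metric.isCompact_of_isClosed_isBounded hVclosed hbd
  have hccont : Continuous (fun v : Fin n → ℝ => c ⬝ᵥ v) := by
    simp only [dotProduct]
    exact continuous_finset_sum _ fun j _ => (continuous_const.mul (continuous_apply j))
  obtain ⟨v₀, hv₀V, hv₀min⟩ := hVcomp.exists_isMinOn hne hccont.continuousOn
  set α := c ⬝ᵥ v₀ with hα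
  -- generators of the dual cone in ℝ^{n+1}
  set g : (Fin m ⊕ Unit) → EuclideanSpace ℝ (Fin (n + 1)) :=
    Sum.elim (fun i => WithLp.toLp 2 (Fin.snoc (A i) (b i) : Fin (n + 1) → ℝ))
      (fun _ => WithLp.toLp 2 (Fin.snoc (0 : Fin n → ℝ) (-1) : Fin (n + 1) → ℝ)) with hg
  set S := {x : EuclideanSpace ℝ (Fin (n + 1)) |
    ∃ ρ : (Fin m ⊕ Unit) → ℝ, 0 ≤ ρ ∧ x = ∑ i, ρ i • g i} with hS
  set p : EuclideanSpace ℝ (Fin (n + 1)) := WithLp.toLp 2 (Fin.snoc c α : Fin (n + 1) → ℝ) with hp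
  have hmem : p ∈ S := by
    by_contra hpS
    -- S is a nonempty closed convex cone
    set K : ConvexCone ℝ (EuclideanSpace ℝ (Fin (n + 1))) :=
      { carrier := S
        smul_mem' := by
          rintro r hr x ⟨ρ, hρ, rfl⟩
          refine ⟨fun i => r * ρ i, fun i => mul_nonneg hr.le (hρ i), ?_⟩
          rw [Finset.smul_sum]
          exact Finset.sum_congr rfl fun i _ => by dsimp only; rw [smul_smul]
        add_mem' := by
          rintro x ⟨ρ, hρ, rfl⟩ y ⟨σ, hσ, rfl⟩
          refine ⟨fun i => ρ i + σ i, fun i => add_nonneg (hρ i) (hσ i), ?_⟩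
          rw [← Finset.sum_add_distrib]
          exact Finset.sum_congr rfl fun i _ => by dsimp only; rw [add_smul] } with hK
    have hKne : (K : Set (EuclideanSpace ℝ (Fin (n + 1)))).Nonempty :=
      ⟨0, ⟨0, le_refl 0, by simp⟩⟩
    have hKclosed : IsClosed (K : Set (EuclideanSpace ℝ (Fin (n + 1)))) := fg_cone_isClosed g
    obtain ⟨y, hy, hyp⟩ :=
      ProperCone.hyperplane_separation'
        ({ carrier := S
           zero_mem' := ⟨0, le_refl 0, by simp⟩
           add_mem' := fun hx hy => K.add_mem' hx hy
           smul_mem' := by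
             rintro r x ⟨ρ, hρ, rfl⟩
             refine ⟨fun i => r * ρ i, fun i => mul_nonneg r.2 (hρ i), ?_⟩
             show (r : ℝ) • (∑ i, ρ i • g i : EuclideanSpace ℝ (Fin (n + 1))) = _
             rw [Finset.smul_sum]
             exact Finset.sum_congr rfl fun i _ => by dsimp only; rw [smul_smul]
           isClosed' := hKclosed } : ProperCone ℝ (EuclideanSpace ℝ (Fin (n + 1)))) hpS
    set w : Fin n → ℝ := fun j => y (Fin.castSucc j) with hw
    set t : ℝ := y (Fin.last n) with ht
    have hinner : ∀ x : EuclideanSpace ℝ (Fin (n + 1)), ⟪x, y⟫ = ∑ j, x j * y j := by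
      intro x; simp [PiLp.inner_apply, RCLike.inner_apply, conj_trivial]
      exact Finset.sum_congr rfl fun j _ => mul_comm _ _
    have hgen : ∀ i₀, g i₀ ∈ K := by
      intro i₀
      refine ⟨fun i => if i = i₀ then 1 else 0, fun i => by positivity, ?_⟩
      rw [Finset.sum_eq_single i₀ (fun i _ hne => by simp [hne]) (by simp)]
      simp
    have h1 : ∀ i : Fin m, 0 ≤ A i ⬝ᵥ w + b i * t := by
      intro i
      have := hy (g (Sum.inl i)) (hgen _)
      rw [hinner] at this
      rw [Fin.sum_univ_castSucc] at this
      simpa [hg, dotProduct, hw, ht] using this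
    have h2 : t ≤ 0 := by
      have := hy (g (Sum.inr ())) (hgen _)
      rw [hinner, Fin.sum_univ_castSucc] at this
      simp only [hg, Sum.elim_inr, Fin.snoc_castSucc, Fin.snoc_last, Pi.zero_apply,
        zero_mul, Finset.sum_const_zero, zero_add, neg_mul, one_mul] at this
      linarith [this]
    have h3 : c ⬝ᵥ w + α * t < 0 := by
      rw [hinner, Fin.sum_univ_castSucc] at hyp
      simpa [hp, dotProduct, hw, ht] using hyp
    rcases h2.lt_or_eq with htneg | htzero
    · -- scale to get a feasible point with value < α
      set v : Fin n → ℝ := (-t)⁻¹ • w with hv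
      have hvV : v ∈ V := by
        intro i
        have hAi := h1 i
        have : b i * (-t) ≤ A i ⬝ᵥ w := by linarith
        have hAv : A.mulVec v i = (-t)⁻¹ * (A i ⬝ᵥ w) := by
          simp [hv, Matrix.mulVec, dotProduct, Finset.mul_sum]
          exact Finset.sum_congr rfl fun j _ => by ring
        have h4 : (0:ℝ) < -t := by linarith
        rw [hAv, ← sub_nonneg]
        have ht0 : t ≠ 0 := by linarith
        have key : (-t)⁻¹ * (A i ⬝ᵥ w) - b i = ((A i ⬝ᵥ w) - b i * (-t)) * (-t)⁻¹ := by
          field_simp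
          ring
        rw [key]
        exact mul_nonneg (by linarith) (inv_nonneg.mpr h4.le)
      have hcv : c ⬝ᵥ v < α := by
        have hcvw : c ⬝ᵥ v = (-t)⁻¹ * (c ⬝ᵥ w) := by
          simp [hv, dotProduct, Finset.mul_sum]
          exact Finset.sum_congr rfl fun j _ => by ring
        have hlt : c ⬝ᵥ w < α * (-t) := by rw [mul_neg]; linarith
        rw [hcvw]
        have h4 : (0:ℝ) < (-t)⁻¹ := inv_pos.mpr (by linarith)
        calc (-t)⁻¹ * (c ⬝ᵥ w) < (-t)⁻¹ * (α * (-t)) :=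
              mul_lt_mul_of_pos_left hlt h4
        _ = α := by
              have ht0 : t ≠ 0 := by linarith
              field_simp
      exact absurd (hv₀min hvV) (by simpa [hα] using not_le.mpr hcv)
    · -- t = 0 : unbounded direction
      have htw : ∀ i, 0 ≤ A i ⬝ᵥ w := fun i => by have h5 := h1 i; rw [htzero] at h5; linarith
      have hcw : c ⬝ᵥ w < 0 := by rw [htzero] at h3; linarith
      have hwne : w ≠ 0 := by
        intro h0; rw [h0] at hcw; simp [dotProduct] at hcw
      obtain ⟨R, hR⟩ := hbd.exists_norm_le
      have hnw : 0 < ‖w‖ := norm_pos_iff.mpr hwne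
      set s : ℝ := (R + ‖v₀‖ + 1) / ‖w‖ with hs
      have hsnn : 0 ≤ s := by
        have h1 : 0 ≤ R := le_trans (norm_nonneg v₀) (hR v₀ hv₀V)
        positivity
      have hfeas : v₀ + s • w ∈ V := by
        intro i
        have : A.mulVec (v₀ + s • w) i = A.mulVec v₀ i + s * (A i ⬝ᵥ w) := by
          simp [Matrix.mulVec_add, Matrix.mulVec_smul]
          exact Or.inl rfl
        rw [this]
        have := hv₀V i
        have := mul_nonneg hsnn (htw i)
        dsimp [V] at *
        linarith [hv₀V i]
      have hnorm : R < ‖v₀ + s • w‖ := by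
        have h1 : ‖s • w‖ ≤ ‖v₀ + s • w‖ + ‖v₀‖ := by
          calc ‖s • w‖ = ‖(v₀ + s • w) - v₀‖ := by congr 1; abel
          _ ≤ ‖v₀ + s • w‖ + ‖v₀‖ := norm_sub_le _ _
        have h2 : ‖s • w‖ = R + ‖v₀‖ + 1 := by
          rw [norm_smul, Real.norm_eq_abs, abs_of_nonneg hsnn, hs]
          field_simp
        linarith
      exact absurd (hR _ hfeas) (not_le.mpr hnorm)
  -- extract the dual solution
  obtain ⟨σ, hσ, hpsum⟩ := hmem
  set ρ : Fin m → ℝ := fun i => σ (Sum.inl i) with hρ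
  set μ : ℝ := σ (Sum.inr ()) with hμ
  have hcoord : ∀ j : Fin (n + 1), p j = ∑ i, σ i • g i j := by
    intro j
    rw [hpsum]
    rw [WithLp.ofLp_sum]
    exact Finset.sum_apply j Finset.univ _
  have hcols : ∀ j : Fin n, Aᵀ.mulVec ρ j = c j := by
    intro j
    have := hcoord (Fin.castSucc j)
    simp only [hp, Fin.snoc_castSucc] at this
    rw [Fintype.sum_sum_type] at this
    simp only [hg, Sum.elim_inl, Sum.elim_inr, Fin.snoc_castSucc, smul_eq_mul,
      Pi.zero_apply, mul_zero, Finset.sum_const_zero, add_zero] at this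
    rw [this]
    simp [Matrix.mulVec, dotProduct, Matrix.transpose_apply, hρ]
    exact Finset.sum_congr rfl fun i _ => by ring
  have hlast : α = b ⬝ᵥ ρ - μ := by
    have := hcoord (Fin.last n)
    simp only [hp, Fin.snoc_last] at this
    rw [Fintype.sum_sum_type] at this
    simp only [hg, Sum.elim_inl, Sum.elim_inr, Fin.snoc_last, smul_eq_mul] at this
    rw [this]
    simp only [dotProduct, hρ, hμ, mul_neg, mul_one]
    rw [Finset.sum_congr rfl (fun i (_ : i ∈ Finset.univ) => mul_comm (σ (Sum.inl i)) (b i))]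
    rw [Fintype.sum_unique (fun x : Unit => -σ (Sum.inr x))]
    ring
  refine ⟨v₀, ρ, hv₀V, fun i => hσ (Sum.inl i), funext hcols, ?_⟩
  have hμnn : 0 ≤ μ := hσ (Sum.inr ())
  rw [← hα] at *
  linarith [hlast]
end

section
/- Let A be a real m×n matrix, b ∈ ℝ^m, and assume V = {v ∈ ℝ^n : A v ≥ b} is nonempty and bounded. Let (x^i, c^i), i = 1,…,N, be data with x^i ∈ ℝ^K and c^i ∈ ℝ^n, and for ω ∈ ℝ^{n×K} define the pessimistic regret Regret(ω) = sup{(1/N) Σ_{i=1}^N (c^i · v^i − z*(c^i)) : v^i ∈ V*(ω x^i) for each i}. Then Regret(ω) ≥ 0 for every ω, and Regret(ω) = 0 if and only if V*(ω x^i) ⊆ V*(c^i) for every i = 1,…,N. -/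
open Matrix Set BigOperators

noncomputable section

/-- The polyhedron `V = {v : A v ≥ b}` (inequalities entrywise). -/
def polyV {m n : ℕ} (A : Matrix (Fin m) (Fin n) ℝ) (b : Fin m → ℝ) : Set (Fin n → ℝ) :=
  {v | b ≤ A.mulVec v}

/-- `z*(c)`: the optimal (infimum) value of `c · v` over `V`. -/
noncomputable def zstar {m n : ℕ} (A : Matrix (Fin m) (Fin n) ℝ) (b : Fin m → ℝ)
    (c : Fin n → ℝ) : ℝ :=
  sInf ((fun v => c ⬝ᵥ v) '' polyV A b)

/-- `V*(c)`: the set of optimal solutions of `min {c · v : v ∈ V}`. -/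
def Vstar {m n : ℕ} (A : Matrix (Fin m) (Fin n) ℝ) (b : Fin m → ℝ)
    (c : Fin n → ℝ) : Set (Fin n → ℝ) :=
  {v ∈ polyV A b | c ⬝ᵥ v = zstar A b c}

/-- The pessimistic regret of the linear model `ω`. -/
noncomputable def pessRegret {m n N K : ℕ} (A : Matrix (Fin m) (Fin n) ℝ) (b : Fin m → ℝ)
    (x : Fin N → Fin K → ℝ) (c : Fin N → Fin n → ℝ)
    (ω : Matrix (Fin n) (Fin K) ℝ) : ℝ :=
  sSup {r : ℝ | ∃ v : Fin N → Fin n → ℝ,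
    (∀ i, v i ∈ Vstar A b (ω.mulVec (x i))) ∧
    r = (1 / (N : ℝ)) * ∑ i, (c i ⬝ᵥ v i - zstar A b (c i))}

lemma cont_dot {n : ℕ} (c : Fin n → ℝ) : Continuous (fun v : Fin n → ℝ => c ⬝ᵥ v) := by
  unfold dotProduct
  exact continuous_finset_sum _ fun i _ => continuous_const.mul (continuous_apply i)

lemma polyV_closed {m n : ℕ} (A : Matrix (Fin m) (Fin n) ℝ) (b : Fin m → ℝ) :
    IsClosed (polyV A b) := by
  have : polyV A b = ⋂ j, {v | b j ≤ (A.mulVec v) j} := by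
    ext v; simp [polyV, Pi.le_def, Set.mem_iInter]
  rw [this]
  exact isClosed_iInter fun j => isClosed_le continuous_const (cont_dot (A j))

lemma polyV_compact {m n : ℕ} (A : Matrix (Fin m) (Fin n) ℝ) (b : Fin m → ℝ)
    (hbd : Bornology.IsBounded (polyV A b)) : IsCompact (polyV A b) :=
  Metric.isCompact_of_isClosed_isBounded (polyV_closed A b) hbd

lemma zstar_le {m n : ℕ} (A : Matrix (Fin m) (Fin n) ℝ) (b : Fin m → ℝ)
    (hbd : Bornology.IsBounded (polyV A b)) (c : Fin n → ℝ) {v : Fin n → ℝ}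
    (hv : v ∈ polyV A b) : zstar A b c ≤ c ⬝ᵥ v := by
  refine csInf_le ?_ ⟨v, hv, rfl⟩
  exact ((polyV_compact A b hbd).image (cont_dot c)).bddBelow

lemma Vstar_nonempty {m n : ℕ} (A : Matrix (Fin m) (Fin n) ℝ) (b : Fin m → ℝ)
    (hne : (polyV A b).Nonempty) (hbd : Bornology.IsBounded (polyV A b)) (c : Fin n → ℝ) :
    (Vstar A b c).Nonempty := by
  obtain ⟨v, hv, hmin⟩ := (polyV_compact A b hbd).exists_isMinOn hne (cont_dot c).continuousOn
  refine ⟨v, hv, le_antisymm ?_ (zstar_le A b hbd c hv)⟩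
  refine le_csInf (hne.image _) ?_
  rintro r ⟨u, hu, rfl⟩
  exact hmin hu

theorem stmt_16 (m n N K : ℕ)
    (A : Matrix (Fin m) (Fin n) ℝ) (b : Fin m → ℝ)
    (hne : (polyV A b).Nonempty) (hbd : Bornology.IsBounded (polyV A b))
    (x : Fin N → Fin K → ℝ) (c : Fin N → Fin n → ℝ) :
    ∀ ω : Matrix (Fin n) (Fin K) ℝ,
      0 ≤ pessRegret A b x c ω ∧
      (pessRegret A b x c ω = 0 ↔
        ∀ i, Vstar A b (ω.mulVec (x i)) ⊆ Vstar A b (c i)) := by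
  intro ω
  set S : Set ℝ := {r : ℝ | ∃ v : Fin N → Fin n → ℝ,
    (∀ i, v i ∈ Vstar A b (ω.mulVec (x i))) ∧
    r = (1 / (N : ℝ)) * ∑ i, (c i ⬝ᵥ v i - zstar A b (c i))} with hS
  have hreg : pessRegret A b x c ω = sSup S := rfl
  -- choice function
  have hchoice : ∀ i, ∃ w, w ∈ Vstar A b (ω.mulVec (x i)) :=
    fun i => Vstar_nonempty A b hne hbd _
  choose w hw using hchoice
  have hSne : S.Nonempty := ⟨_, w, hw, rfl⟩
  -- nonnegativity of elements
  have hnonneg : ∀ r ∈ S, 0 ≤ r := by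
    rintro r ⟨v, hv, rfl⟩
    refine mul_nonneg (by positivity) (Finset.sum_nonneg fun i _ => ?_)
    have := zstar_le A b hbd (c i) (hv i).1
    linarith
  -- bounded above
  have hbdd : BddAbove S := by
    refine ⟨(1 / (N : ℝ)) * ∑ i, (sSup ((fun v => c i ⬝ᵥ v) '' polyV A b) - zstar A b (c i)), ?_⟩
    rintro r ⟨v, hv, rfl⟩
    refine mul_le_mul_of_nonneg_left (Finset.sum_le_sum fun i _ => ?_) (by positivity)
    have : c i ⬝ᵥ v i ≤ sSup ((fun v => c i ⬝ᵥ v) '' polyV A b) :=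
      le_csSup ((polyV_compact A b hbd).image (cont_dot (c i))).bddAbove ⟨v i, (hv i).1, rfl⟩
    linarith
  have h0le : (0 : ℝ) ≤ sSup S := by
    obtain ⟨r, hr⟩ := hSne
    exact le_trans (hnonneg r hr) (le_csSup hbdd hr)
  rw [hreg]
  refine ⟨h0le, ?_, ?_⟩
  · -- sSup S = 0 → inclusion
    intro hzero i v0 hv0
    by_contra hnot
    have hv0V : v0 ∈ polyV A b := hv0.1
    have hgt : zstar A b (c i) < c i ⬝ᵥ v0 := by
      rcases lt_or_eq_of_le (zstar_le A b hbd (c i) hv0V) with h | h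
      · exact h
      · exact absurd ⟨hv0V, h.symm⟩ hnot
    set v := Function.update w i v0 with hvdef
    have hvmem : ∀ j, v j ∈ Vstar A b (ω.mulVec (x j)) := by
      intro j
      by_cases hj : j = i
      · subst hj; simpa [hvdef] using hv0
      · simpa [hvdef, Function.update_of_ne hj] using hw j
    have hterm : ∀ j, 0 ≤ c j ⬝ᵥ v j - zstar A b (c j) := by
      intro j
      have := zstar_le A b hbd (c j) (hvmem j).1
      linarith
    have hsum : 0 < ∑ j, (c j ⬝ᵥ v j - zstar A b (c j)) := by
      refine Finset.sum_pos' (fun j _ => hterm j) ⟨i, Finset.mem_univ i, ?_⟩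
      have : v i = v0 := by simp [hvdef]
      rw [this]; linarith
    have hNpos : (0 : ℝ) < N := by
      have : 0 < N := Fin.pos i
      exact_mod_cast this
    have hrpos : 0 < (1 / (N : ℝ)) * ∑ j, (c j ⬝ᵥ v j - zstar A b (c j)) :=
      mul_pos (by positivity) hsum
    have hmem : (1 / (N : ℝ)) * ∑ j, (c j ⬝ᵥ v j - zstar A b (c j)) ∈ S := ⟨v, hvmem, rfl⟩
    have := le_csSup hbdd hmem
    linarith [hzero ▸ this]
  · -- inclusion → sSup S = 0
    intro hsub
    refine le_antisymm (csSup_le hSne ?_) h0le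
    rintro r ⟨v, hv, rfl⟩
    have : ∀ i, c i ⬝ᵥ v i - zstar A b (c i) = 0 := by
      intro i
      have := (hsub i (hv i)).2
      linarith
    simp [this]
end
end
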